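/- Let π* be an optimal policy (maximizing V^π(Ω) over all policies) and let S* be the set of non-terminal states appearing in the trajectory sets T_{Ω,t}^{π*} for 0 ≤ t ≤ τ_Ω^{π*} − 1. Then for every policy π and every l ∈ S*, V^π(l) ≤ V^{π*}(l). -/

import Mathlib

open Finset

/-- A branch: for each feature, either unused (`none`) or fixed to a category. -/
abbrev Branch (q : ℕ) (C : Fin q → ℕ) : Type := ∀ i : Fin q, Option (Fin (C i))

/-- States: `Sum.inl l` is the (non-terminal) branch `l`, `Sum.inr l` is its terminal state `l̄`. -/
abbrev BState (q : ℕ) (C : Fin q → ℕ) : Type := Branch q C ⊕ Branch q C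

/-- The root branch `Ω`. -/
def root (q : ℕ) (C : Fin q → ℕ) : Branch q C := fun _ => none

/-- The child of `l` obtained by fixing unused feature `i` to category `j`. -/
def child {q : ℕ} {C : Fin q → ℕ} (l : Branch q C) (i : Fin q) (j : Fin (C i)) : Branch q C :=
  Function.update l i (some j)

/-- `Children(l, i)`. -/
def childrenF {q : ℕ} {C : Fin q → ℕ} (l : Branch q C) (i : Fin q) : Finset (Branch q C) :=
  Finset.univ.image (fun j : Fin (C i) => child l i j)

/-- A policy: `act l = none` is the terminal action `ā`, `act l = some i` splits on the
unused feature `i`. -/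
structure Policy (q : ℕ) (C : Fin q → ℕ) where
  act : Branch q C → Option (Fin q)
  valid : ∀ l i, act l = some i → l i = none

/-- Transition set of the action taken by `π` at branch `l`. -/
def stepSet {q : ℕ} {C : Fin q → ℕ} (π : Policy q C) (l : Branch q C) : Finset (BState q C) :=
  match π.act l with
  | none => {Sum.inr l}
  | some i => (childrenF l i).image Sum.inl

/-- Trajectory of policy `π` from branch `l`. -/
def traj {q : ℕ} {C : Fin q → ℕ} (π : Policy q C) (l : Branch q C) : ℕ → Finset (BState q C)
  | 0 => {Sum.inl l}
  | t + 1 => (traj π l t).biUnion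
      (fun s => Sum.elim (fun lu => stepSet π lu) (fun lu => ({Sum.inr lu} : Finset (BState q C))) s)

/-- `τ_l^π`: minimal time `t ≥ 1` at which the trajectory consists of terminal states only. -/
noncomputable def tau {q : ℕ} {C : Fin q → ℕ} (π : Policy q C) (l : Branch q C) : ℕ :=
  sInf {t : ℕ | 1 ≤ t ∧ ∀ x ∈ traj π l t, x.isRight}

/-- A data point `x` is in branch `l`. -/
def inBranch {q : ℕ} {C : Fin q → ℕ} (l : Branch q C) (x : ∀ i : Fin q, Fin (C i)) : Prop :=
  ∀ (i : Fin q) (c : Fin (C i)), l i = some c → x i = c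

instance {q : ℕ} {C : Fin q → ℕ} (l : Branch q C) (x : ∀ i, Fin (C i)) :
    Decidable (inBranch l x) := by unfold inBranch; infer_instance

/-- `n(l)`: number of data points in `l`. -/
def nIn {q K : ℕ} {C : Fin q → ℕ} (D : Multiset ((∀ i : Fin q, Fin (C i)) × Fin K))
    (l : Branch q C) : ℕ :=
  (D.filter (fun p => inBranch l p.1)).card

/-- `n_k(l)`: number of data points in `l` of class `k`. -/
def nk {q K : ℕ} {C : Fin q → ℕ} (D : Multiset ((∀ i : Fin q, Fin (C i)) × Fin K))
    (l : Branch q C) (k : Fin K) : ℕ :=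
  (D.filter (fun p => inBranch l p.1 ∧ p.2 = k)).card

/-- `H(l) = (max_k n_k(l)) / n`. -/
noncomputable def Hb {q K : ℕ} {C : Fin q → ℕ} (D : Multiset ((∀ i : Fin q, Fin (C i)) × Fin K))
    (l : Branch q C) : ℝ :=
  ((Finset.univ.sup (fun k : Fin K => nk D l k) : ℕ) : ℝ) / (Multiset.card D : ℝ)

/-- Reward collected at a state of the trajectory: `H(l)` for the terminal action,
`-λ` for a split action, `0` at terminal states. -/
noncomputable def rew {q K : ℕ} {C : Fin q → ℕ}
    (D : Multiset ((∀ i : Fin q, Fin (C i)) × Fin K)) (lam : ℝ) (π : Policy q C) :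
    BState q C → ℝ
  | Sum.inl lu => match π.act lu with
      | none => Hb D lu
      | some _ => -lam
  | Sum.inr _ => 0

/-- Value `V^π(l)`. -/
noncomputable def V {q K : ℕ} {C : Fin q → ℕ}
    (D : Multiset ((∀ i : Fin q, Fin (C i)) × Fin K)) (lam : ℝ)
    (π : Policy q C) (l : Branch q C) : ℝ :=
  ∑ t ∈ Finset.range (tau π l), ∑ x ∈ traj π l t, rew D lam π x

/-- State-action value `Q^π(l, a)`. -/
noncomputable def Qv {q K : ℕ} {C : Fin q → ℕ}
    (D : Multiset ((∀ i : Fin q, Fin (C i)) × Fin K)) (lam : ℝ)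
    (π : Policy q C) (l : Branch q C) : Option (Fin q) → ℝ
  | none => Hb D l
  | some i => -lam + ∑ j : Fin (C i), V D lam π (child l i j)

/-- The available actions `A(l)`. -/
def Avail {q : ℕ} {C : Fin q → ℕ} (l : Branch q C) : Finset (Option (Fin q)) :=
  insert none ((Finset.univ.filter (fun i : Fin q => l i = none)).image some)

theorem Avail_nonempty {q : ℕ} {C : Fin q → ℕ} (l : Branch q C) : (Avail l).Nonempty :=
  ⟨none, Finset.mem_insert_self _ _⟩

/-- The sub-DT of `π` rooted in `l`: the branches whose terminal states constitute
the trajectory at time `τ_l^π`. -/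
noncomputable def subDTof {q : ℕ} {C : Fin q → ℕ} (π : Policy q C) (l : Branch q C) : Finset (Branch q C) :=
  (traj π l (tau π l)).image (Sum.elim id id)

/-- `SubDT l T m`: `T` is a sub-DT rooted in `l` obtained by `m` split operations. -/
inductive SubDT {q : ℕ} {C : Fin q → ℕ} : Branch q C → Finset (Branch q C) → ℕ → Prop
  | leaf (l : Branch q C) : SubDT l {l} 0
  | split (l : Branch q C) (T : Finset (Branch q C)) (m : ℕ) (l' : Branch q C) (i : Fin q)
      (hT : SubDT l T m) (hmem : l' ∈ T) (hnone : l' i = none) :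
      SubDT l (T.erase l' ∪ childrenF l' i) (m + 1)

/-- `H(T) = ∑_{l ∈ T} H(l)`. -/
noncomputable def HT {q K : ℕ} {C : Fin q → ℕ}
    (D : Multiset ((∀ i : Fin q, Fin (C i)) × Fin K)) (T : Finset (Branch q C)) : ℝ :=
  ∑ l ∈ T, Hb D l

/-- `splits(l)`: number of features used by branch `l`. -/
def nsplits {q : ℕ} {C : Fin q → ℕ} (l : Branch q C) : ℕ :=
  (Finset.univ.filter (fun i : Fin q => l i ≠ none)).card


/-! ### Auxiliary development -/

section Aux

variable {q : ℕ} {C : Fin q → ℕ}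

/-- `b` extends `l` (is a descendant of `l`). -/
def desc (l b : Branch q C) : Prop := ∀ i c, l i = some c → b i = some c

instance (l b : Branch q C) : Decidable (desc l b) := by unfold desc; infer_instance

lemma desc_refl (l : Branch q C) : desc l l := fun _ _ h => h

lemma desc_trans {a b c : Branch q C} (h1 : desc a b) (h2 : desc b c) : desc a c :=
  fun i x hx => h2 i x (h1 i x hx)

lemma desc_antisymm {a b : Branch q C} (h1 : desc a b) (h2 : desc b a) : a = b := by
  funext i
  cases ha : a i with
  | some c => exact (h1 i c ha).symm
  | none =>
    cases hb : b i with
    | none => rfl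
    | some c => exact absurd (h2 i c hb) (by simp [ha])

/-- The branch underlying a state. -/
def br : BState q C → Branch q C := Sum.elim id id

@[simp] lemma br_inl (b : Branch q C) : br (Sum.inl b : BState q C) = b := rfl
@[simp] lemma br_inr (b : Branch q C) : br (Sum.inr b : BState q C) = b := rfl

lemma inBranch_of_desc {l b : Branch q C} {x : ∀ i, Fin (C i)}
    (h : desc l b) (hx : inBranch b x) : inBranch l x :=
  fun i c hc => hx i c (h i c hc)

/-- Overlap of the regions of two branches. -/
def Ov (l1 l2 : Branch q C) : Prop := ∃ x : ∀ i, Fin (C i), inBranch l1 x ∧ inBranch l2 x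

lemma branch_nonempty (hC : ∀ i, 2 ≤ C i) (l : Branch q C) : ∃ x, inBranch l x := by
  refine ⟨fun i => (l i).getD ⟨0, by have := hC i; omega⟩, ?_⟩
  intro i c h
  simp [h]

lemma child_apply_self (l : Branch q C) (i : Fin q) (j : Fin (C i)) :
    child l i j i = some j := by unfold child; simp

lemma child_apply_ne (l : Branch q C) (i : Fin q) (j : Fin (C i)) {i' : Fin q} (h : i' ≠ i) :
    child l i j i' = l i' := by unfold child; exact Function.update_of_ne h _ _

lemma desc_child {l : Branch q C} {i : Fin q} (h : l i = none) (j : Fin (C i)) :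
    desc l (child l i j) := by
  intro i' c hc
  rcases eq_or_ne i' i with rfl | hne
  · rw [h] at hc; cases hc
  · rw [child_apply_ne l i j hne]; exact hc

lemma inBranch_child {l : Branch q C} {i : Fin q} (h : l i = none) (j : Fin (C i))
    {x : ∀ i, Fin (C i)} (hx : inBranch (child l i j) x) : inBranch l x :=
  inBranch_of_desc (desc_child h j) hx

lemma nsplits_child {l : Branch q C} {i : Fin q} (h : l i = none) (j : Fin (C i)) :
    nsplits (child l i j) = nsplits l + 1 := by
  unfold nsplits
  have key : (Finset.univ.filter fun i' => child l i j i' ≠ none)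
      = insert i (Finset.univ.filter fun i' => l i' ≠ none) := by
    ext i'
    rcases eq_or_ne i' i with rfl | hne
    · simp [child_apply_self]
    · simp [child_apply_ne l i j hne, hne]
  rw [key, Finset.card_insert_of_notMem (by simp [h])]

lemma nsplits_le (l : Branch q C) : nsplits l ≤ q := by
  calc nsplits l ≤ Finset.univ.card := Finset.card_filter_le _ _
  _ = q := by simp

/-- The one-step transition function on states. -/
def stepf (π : Policy q C) : BState q C → Finset (BState q C) :=
  Sum.elim (fun lu => stepSet π lu) (fun lu => ({Sum.inr lu} : Finset (BState q C)))

lemma traj_succ (π : Policy q C) (l : Branch q C) (t : ℕ) :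
    traj π l (t + 1) = (traj π l t).biUnion (stepf π) := rfl

lemma stepSet_none {π : Policy q C} {l : Branch q C} (h : π.act l = none) :
    stepSet π l = {Sum.inr l} := by
  unfold stepSet; rw [h]

lemma stepSet_some {π : Policy q C} {l : Branch q C} {i : Fin q} (h : π.act l = some i) :
    stepSet π l = (childrenF l i).image Sum.inl := by
  unfold stepSet; rw [h]

lemma stepSet_congr {π1 π2 : Policy q C} {l : Branch q C} (h : π1.act l = π2.act l) :
    stepSet π1 l = stepSet π2 l := by
  unfold stepSet; rw [h]

lemma desc_of_mem_stepf {π : Policy q C} {x y : BState q C} (hy : y ∈ stepf π x) :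
    desc (br x) (br y) := by
  cases x with
  | inr b =>
    simp only [stepf, Sum.elim_inr, Finset.mem_singleton] at hy
    subst hy; exact desc_refl b
  | inl b =>
    simp only [stepf, Sum.elim_inl] at hy
    cases h : π.act b with
    | none =>
      rw [stepSet_none h, Finset.mem_singleton] at hy
      subst hy; exact desc_refl b
    | some i =>
      rw [stepSet_some h, Finset.mem_image] at hy
      obtain ⟨c, hc, rfl⟩ := hy
      rw [childrenF, Finset.mem_image] at hc
      obtain ⟨j, _, rfl⟩ := hc
      exact desc_child (π.valid b i h) j

lemma stepf_pairwise {π : Policy q C} {x y1 y2 : BState q C}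
    (h1 : y1 ∈ stepf π x) (h2 : y2 ∈ stepf π x) (hov : Ov (br y1) (br y2)) : y1 = y2 := by
  cases x with
  | inr b =>
    simp only [stepf, Sum.elim_inr, Finset.mem_singleton] at h1 h2
    rw [h1, h2]
  | inl b =>
    simp only [stepf, Sum.elim_inl] at h1 h2
    cases h : π.act b with
    | none =>
      rw [stepSet_none h, Finset.mem_singleton] at h1 h2
      rw [h1, h2]
    | some i =>
      rw [stepSet_some h, Finset.mem_image] at h1 h2
      obtain ⟨c1, hc1, rfl⟩ := h1
      obtain ⟨c2, hc2, rfl⟩ := h2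
      rw [childrenF, Finset.mem_image] at hc1 hc2
      obtain ⟨j1, _, rfl⟩ := hc1
      obtain ⟨j2, _, rfl⟩ := hc2
      obtain ⟨pt, hp1, hp2⟩ := hov
      have e1 : pt i = j1 := hp1 i j1 (child_apply_self b i j1)
      have e2 : pt i = j2 := hp2 i j2 (child_apply_self b i j2)
      rw [e1.symm.trans e2]

/-- Pairwise region-disjointness of the states of a trajectory. -/
def PD (F : Finset (BState q C)) : Prop :=
  ∀ x ∈ F, ∀ y ∈ F, Ov (br x) (br y) → x = y

lemma PD_traj (π : Policy q C) (l : Branch q C) : ∀ t, PD (traj π l t) := by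
  intro t
  induction t with
  | zero =>
    intro x hx y hy _
    simp only [traj, Finset.mem_singleton] at hx hy
    rw [hx, hy]
  | succ t ih =>
    intro x hx y hy hov
    rw [traj_succ, Finset.mem_biUnion] at hx hy
    obtain ⟨px, hpx, hx⟩ := hx
    obtain ⟨py, hpy, hy⟩ := hy
    obtain ⟨pt, h1, h2⟩ := hov
    have hppt : Ov (br px) (br py) :=
      ⟨pt, inBranch_of_desc (desc_of_mem_stepf hx) h1,
           inBranch_of_desc (desc_of_mem_stepf hy) h2⟩
    have : px = py := ih px hpx py hpy hppt
    subst this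
    exact stepf_pairwise hx hy ⟨pt, h1, h2⟩

lemma terminal_persist (π : Policy q C) (l b : Branch q C) {t : ℕ}
    (h : Sum.inr b ∈ traj π l t) : ∀ s, Sum.inr b ∈ traj π l (t + s) := by
  intro s
  induction s with
  | zero => exact h
  | succ s ih =>
    rw [show t + (s+1) = (t+s) + 1 by omega, traj_succ, Finset.mem_biUnion]
    exact ⟨Sum.inr b, ih, by simp [stepf]⟩

lemma ancestry (π : Policy q C) (l : Branch q C) (t : ℕ) :
    ∀ s, ∀ x ∈ traj π l (t + s), ∃ y ∈ traj π l t, desc (br y) (br x) := by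
  intro s
  induction s with
  | zero => exact fun x hx => ⟨x, hx, desc_refl _⟩
  | succ s ih =>
    intro x hx
    rw [show t + (s+1) = (t+s) + 1 by omega, traj_succ, Finset.mem_biUnion] at hx
    obtain ⟨p, hp, hx⟩ := hx
    obtain ⟨y, hy, hd⟩ := ih p hp
    exact ⟨y, hy, desc_trans hd (desc_of_mem_stepf hx)⟩

lemma only_desc_at_t0 {π : Policy q C} {r l : Branch q C} {t0 : ℕ} (hC : ∀ i, 2 ≤ C i)
    (hl : Sum.inl l ∈ traj π r t0) :
    ∀ x ∈ traj π r t0, desc l (br x) → x = Sum.inl l := by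
  intro x hx hd
  obtain ⟨pt, hpt⟩ := branch_nonempty hC (br x)
  exact PD_traj π r t0 x hx (Sum.inl l) hl ⟨pt, hpt, inBranch_of_desc hd hpt⟩

lemma not_desc_of_lt {π : Policy q C} {r l : Branch q C} {t0 : ℕ} (hC : ∀ i, 2 ≤ C i)
    (hl : Sum.inl l ∈ traj π r t0) :
    ∀ t < t0, ∀ b, Sum.inl b ∈ traj π r t → ¬ desc l b := by
  intro t ht b hb hdlb
  -- ancestor of `l` at time `t`
  obtain ⟨y, hy, hdy⟩ := ancestry π r t (t0 - t) (Sum.inl l)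
    (by rw [show t + (t0 - t) = t0 by omega]; exact hl)
  obtain ⟨pt, hpt⟩ := branch_nonempty hC b
  have hptl : inBranch l pt := inBranch_of_desc hdlb hpt
  have hpty : inBranch (br y) pt := inBranch_of_desc hdy hptl
  have hyb : y = Sum.inl b := PD_traj π r t y hy (Sum.inl b) hb ⟨pt, hpty, hpt⟩
  subst hyb
  have hbl : b = l := desc_antisymm (by exact hdy) hdlb
  subst hbl
  -- so `Sum.inl b ∈ traj π r t`, with `b = l`
  cases hact : π.act b with
  | none =>
    have h1 : Sum.inr b ∈ traj π r (t + 1) := by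
      rw [traj_succ, Finset.mem_biUnion]
      exact ⟨Sum.inl b, hb, by simp [stepf, stepSet_none hact]⟩
    have h2 : Sum.inr b ∈ traj π r t0 := by
      have := terminal_persist π r b h1 (t0 - (t+1))
      rwa [show t + 1 + (t0 - (t+1)) = t0 by omega] at this
    have : (Sum.inr b : BState q C) = Sum.inl b :=
      PD_traj π r t0 (Sum.inr b) h2 (Sum.inl b) hl ⟨pt, hpt, hpt⟩
    cases this
  | some i =>
    have hbi : b i = none := π.valid b i hact
    set j0 : Fin (C i) := ⟨0, by have := hC i; omega⟩
    have hchild : Sum.inl (child b i j0) ∈ traj π r (t + 1) := by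
      rw [traj_succ, Finset.mem_biUnion]
      refine ⟨Sum.inl b, hb, ?_⟩
      simp only [stepf, Sum.elim_inl, stepSet_some hact, Finset.mem_image]
      exact ⟨child b i j0, by rw [childrenF, Finset.mem_image]; exact ⟨j0, Finset.mem_univ _, rfl⟩, rfl⟩
    obtain ⟨y', hy', hdy'⟩ := ancestry π r (t+1) (t0 - (t+1)) (Sum.inl b)
      (by rw [show t + 1 + (t0 - (t+1)) = t0 by omega]; exact hl)
    obtain ⟨pc, hpc⟩ := branch_nonempty hC (child b i j0)
    have hpcb : inBranch b pc := inBranch_child hbi j0 hpc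
    have hy'c : y' = Sum.inl (child b i j0) := by
      refine PD_traj π r (t+1) y' hy' _ hchild ⟨pc, inBranch_of_desc hdy' hpcb, hpc⟩
    subst hy'c
    have : b i = some j0 := hdy' i j0 (child_apply_self b i j0)
    rw [hbi] at this
    cases this

/-- The policy following `π` on descendants of `l` and `πs` elsewhere. -/
def mix (l : Branch q C) (π πs : Policy q C) : Policy q C where
  act b := if desc l b then π.act b else πs.act b
  valid b i h := by
    by_cases hd : desc l b
    · rw [if_pos hd] at h; exact π.valid b i h
    · rw [if_neg hd] at h; exact πs.valid b i h

lemma mix_act_desc {l b : Branch q C} (π πs : Policy q C) (h : desc l b) :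
    (mix l π πs).act b = π.act b := if_pos h

lemma mix_act_nondesc {l b : Branch q C} (π πs : Policy q C) (h : ¬ desc l b) :
    (mix l π πs).act b = πs.act b := if_neg h

lemma stepf_congr {π1 π2 : Policy q C} {x : BState q C}
    (h : ∀ b, x = Sum.inl b → π1.act b = π2.act b) : stepf π1 x = stepf π2 x := by
  cases x with
  | inr b => rfl
  | inl b => simp only [stepf, Sum.elim_inl]; exact stepSet_congr (h b rfl)

lemma traj_desc (π : Policy q C) (l : Branch q C) :
    ∀ t, ∀ x ∈ traj π l t, desc l (br x) := by
  intro t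
  induction t with
  | zero =>
    intro x hx
    simp only [traj, Finset.mem_singleton] at hx
    subst hx; exact desc_refl l
  | succ t ih =>
    intro x hx
    rw [traj_succ, Finset.mem_biUnion] at hx
    obtain ⟨p, hp, hx⟩ := hx
    exact desc_trans (ih p hp) (desc_of_mem_stepf hx)

lemma traj_locality {π1 π2 : Policy q C} {l : Branch q C}
    (h : ∀ b, desc l b → π1.act b = π2.act b) :
    ∀ t, traj π1 l t = traj π2 l t := by
  intro t
  induction t with
  | zero => rfl
  | succ t ih =>
    rw [traj_succ, traj_succ, ← ih]
    apply Finset.biUnion_congr rfl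
    intro x hx
    exact stepf_congr (fun b hb => h b (by rw [hb] at hx; exact traj_desc π1 l t _ hx))

lemma nsplits_traj (π : Policy q C) (l : Branch q C) :
    ∀ t b, Sum.inl b ∈ traj π l t → nsplits l + t ≤ nsplits b := by
  intro t
  induction t with
  | zero =>
    intro b hb
    simp only [traj, Finset.mem_singleton, Sum.inl.injEq] at hb
    subst hb; omega
  | succ t ih =>
    intro b hb
    rw [traj_succ, Finset.mem_biUnion] at hb
    obtain ⟨p, hp, hb⟩ := hb
    cases p with
    | inr b' => simp [stepf] at hb
    | inl b' =>
      simp only [stepf, Sum.elim_inl] at hb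
      cases hact : π.act b' with
      | none => rw [stepSet_none hact] at hb; simp at hb
      | some i =>
        rw [stepSet_some hact, Finset.mem_image] at hb
        obtain ⟨c, hc, hcb⟩ := hb
        cases hcb
        rw [childrenF, Finset.mem_image] at hc
        obtain ⟨j, _, rfl⟩ := hc
        have := ih b' hp
        rw [nsplits_child (π.valid b' i hact) j]
        omega

lemma allRight_traj (π : Policy q C) (l : Branch q C) :
    ∀ x ∈ traj π l (q + 1), x.isRight := by
  intro x hx
  cases x with
  | inr _ => rfl
  | inl b =>
    have := nsplits_traj π l (q+1) b hx
    have := nsplits_le b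
    omega

lemma tau_le (π : Policy q C) (l : Branch q C) : tau π l ≤ q + 1 :=
  Nat.sInf_le ⟨by omega, allRight_traj π l⟩

lemma tau_spec (π : Policy q C) (l : Branch q C) : ∀ x ∈ traj π l (tau π l), x.isRight :=
  (Nat.sInf_mem (⟨q + 1, by omega, allRight_traj π l⟩ :
    {t : ℕ | 1 ≤ t ∧ ∀ x ∈ traj π l t, x.isRight}.Nonempty)).2

lemma traj_stab {π : Policy q C} {l : Branch q C} {t : ℕ}
    (h : ∀ x ∈ traj π l t, x.isRight) : traj π l (t + 1) = traj π l t := by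
  rw [traj_succ]
  ext y
  simp only [Finset.mem_biUnion]
  constructor
  · rintro ⟨x, hx, hy⟩
    cases x with
    | inl b => exact absurd (h _ hx) (by simp)
    | inr b => simp only [stepf, Sum.elim_inr, Finset.mem_singleton] at hy; subst hy; exact hx
  · intro hy
    refine ⟨y, hy, ?_⟩
    cases y with
    | inl b => exact absurd (h _ hy) (by simp)
    | inr b => simp [stepf]

lemma allRight_of_le (π : Policy q C) (l : Branch q C) :
    ∀ t, tau π l ≤ t → ∀ x ∈ traj π l t, x.isRight := by
  intro t ht
  obtain ⟨s, rfl⟩ := Nat.exists_eq_add_of_le ht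
  clear ht
  induction s with
  | zero => exact tau_spec π l
  | succ s ih =>
    rw [show tau π l + (s+1) = (tau π l + s) + 1 by omega, traj_stab ih]
    exact ih

section Val

variable {K : ℕ} (D : Multiset ((∀ i : Fin q, Fin (C i)) × Fin K)) (lam : ℝ)

/-- Reward sum at time `t`. -/
noncomputable def Sv (π : Policy q C) (l : Branch q C) (t : ℕ) : ℝ :=
  ∑ x ∈ traj π l t, rew D lam π x

lemma rew_inr (π : Policy q C) (b : Branch q C) : rew D lam π (Sum.inr b) = 0 := rfl

lemma rew_congr {π1 π2 : Policy q C} (x : BState q C)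
    (h : ∀ b, x = Sum.inl b → π1.act b = π2.act b) :
    rew D lam π1 x = rew D lam π2 x := by
  cases x with
  | inr b => rfl
  | inl b => simp only [rew]; rw [h b rfl]

lemma Sv_zero_of_allRight {π : Policy q C} {l : Branch q C} {t : ℕ}
    (h : ∀ x ∈ traj π l t, x.isRight) : Sv D lam π l t = 0 := by
  apply Finset.sum_eq_zero
  intro x hx
  cases x with
  | inl b => exact absurd (h _ hx) (by simp)
  | inr b => rfl

lemma V_eq_horizon (π : Policy q C) (l : Branch q C) {M : ℕ} (hM : tau π l ≤ M) :
    V D lam π l = ∑ t ∈ Finset.range M, Sv D lam π l t := by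
  obtain ⟨s, rfl⟩ := Nat.exists_eq_add_of_le hM
  clear hM
  induction s with
  | zero => rfl
  | succ s ih =>
    rw [show tau π l + (s+1) = (tau π l + s) + 1 by omega, Finset.sum_range_succ, ← ih,
      Sv_zero_of_allRight D lam (allRight_of_le π l _ (by omega)), add_zero]

lemma tau_locality {π1 π2 : Policy q C} {l : Branch q C}
    (h : ∀ b, desc l b → π1.act b = π2.act b) : tau π1 l = tau π2 l := by
  unfold tau
  congr 1
  ext t
  constructor <;> intro ⟨h1, h2⟩ <;> refine ⟨h1, ?_⟩
  · rw [← traj_locality h]; exact h2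
  · rw [traj_locality h]; exact h2

lemma V_locality {π1 π2 : Policy q C} {l : Branch q C}
    (h : ∀ b, desc l b → π1.act b = π2.act b) : V D lam π1 l = V D lam π2 l := by
  unfold V
  rw [tau_locality h]
  apply Finset.sum_congr rfl
  intro t _
  rw [← traj_locality h]
  apply Finset.sum_congr rfl
  intro x hx
  exact rew_congr D lam x (fun b hb => h b (by rw [hb] at hx; exact traj_desc π1 l t _ hx))

end Val

lemma traj_mix_pre (hC : ∀ i, 2 ≤ C i) (π πs : Policy q C) {r l : Branch q C} {t0 : ℕ}
    (hl : Sum.inl l ∈ traj πs r t0) :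
    ∀ t ≤ t0, traj (mix l π πs) r t = traj πs r t := by
  intro t ht
  induction t with
  | zero => rfl
  | succ t ih =>
    rw [traj_succ, traj_succ, ih (by omega)]
    apply Finset.biUnion_congr rfl
    intro x hx
    refine stepf_congr (fun b hb => ?_)
    subst hb
    exact mix_act_nondesc π πs (not_desc_of_lt hC hl t (by omega) b hx)

lemma main_invariant (hC : ∀ i, 2 ≤ C i) (π πs : Policy q C) {r l : Branch q C} {t0 : ℕ}
    (hl : Sum.inl l ∈ traj πs r t0) :
    ∀ s : ℕ,
      ((traj πs r (t0 + s)).filter (fun x => desc l (br x)) = traj πs l s)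
      ∧ (traj (mix l π πs) r (t0 + s)
          = (traj πs r (t0 + s)).filter (fun x => ¬ desc l (br x)) ∪ traj (mix l π πs) l s)
      ∧ (∀ x ∈ (traj πs r (t0 + s)).filter (fun x => ¬ desc l (br x)), ¬ Ov (br x) l) := by
  intro s
  induction s with
  | zero =>
    refine ⟨?_, ?_, ?_⟩
    · ext x
      simp only [Finset.mem_filter, Nat.add_zero]
      constructor
      · rintro ⟨hx, hd⟩
        rw [only_desc_at_t0 hC hl x hx hd]
        simp [traj]
      · intro hx
        simp only [traj, Finset.mem_singleton] at hx
        subst hx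
        exact ⟨hl, desc_refl l⟩
    · rw [Nat.add_zero, traj_mix_pre hC π πs hl t0 le_rfl]
      show traj πs r t0 = _ ∪ {Sum.inl l}
      have : ({Sum.inl l} : Finset (BState q C))
          = (traj πs r t0).filter (fun x => desc l (br x)) := by
        ext x
        simp only [Finset.mem_singleton, Finset.mem_filter]
        constructor
        · rintro rfl; exact ⟨hl, desc_refl l⟩
        · rintro ⟨hx, hd⟩; exact only_desc_at_t0 hC hl x hx hd
      rw [this, Finset.union_comm]
      exact (Finset.filter_union_filter_not_eq (fun x => desc l (br x)) (traj πs r t0)).symm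
    · rintro x hx ⟨pt, hp1, hp2⟩
      rw [Finset.mem_filter, Nat.add_zero] at hx
      have hxl : x = Sum.inl l := PD_traj πs r t0 x hx.1 (Sum.inl l) hl ⟨pt, hp1, hp2⟩
      apply hx.2
      subst hxl
      exact desc_refl l
  | succ s ih =>
    obtain ⟨ha, hb, hc⟩ := ih
    -- notation
    set A := (traj πs r (t0 + s)).filter (fun x => ¬ desc l (br x)) with hA
    -- outputs of A are non-descendants
    have fA : ∀ x ∈ A, ∀ y ∈ stepf πs x, ¬ desc l (br y) := by
      intro x hx y hy hd
      obtain ⟨pt, hpt⟩ := branch_nonempty hC (br y)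
      exact hc x hx ⟨pt, inBranch_of_desc (desc_of_mem_stepf hy) hpt, inBranch_of_desc hd hpt⟩
    have fA2 : ∀ x ∈ A, stepf (mix l π πs) x = stepf πs x := by
      intro x hx
      refine stepf_congr (fun b hb => ?_)
      subst hb
      rw [hA, Finset.mem_filter] at hx
      exact mix_act_nondesc π πs hx.2
    have hsplit : traj πs r (t0 + s) = A ∪ traj πs l s := by
      rw [hA, ← ha, Finset.union_comm]
      exact (Finset.filter_union_filter_not_eq (fun x => desc l (br x)) (traj πs r (t0 + s))).symm
    -- (a)
    have ha' : (traj πs r (t0 + s + 1)).filter (fun x => desc l (br x)) = traj πs l (s + 1) := by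
      ext y
      simp only [Finset.mem_filter, traj_succ, Finset.mem_biUnion]
      constructor
      · rintro ⟨⟨x, hx, hy⟩, hd⟩
        rw [hsplit, Finset.mem_union] at hx
        rcases hx with hx | hx
        · exact absurd hd (fA x hx y hy)
        · exact ⟨x, hx, hy⟩
      · rintro ⟨x, hx, hy⟩
        have hxmem : x ∈ traj πs r (t0 + s) := by rw [hsplit, Finset.mem_union]; exact Or.inr hx
        have hdx : desc l (br x) := traj_desc πs l s x hx
        exact ⟨⟨x, hxmem, hy⟩, desc_trans hdx (desc_of_mem_stepf hy)⟩
    have haA : (traj πs r (t0 + s + 1)).filter (fun x => ¬ desc l (br x))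
        = A.biUnion (stepf πs) := by
      ext y
      simp only [Finset.mem_filter, traj_succ, Finset.mem_biUnion]
      constructor
      · rintro ⟨⟨x, hx, hy⟩, hd⟩
        rw [hsplit, Finset.mem_union] at hx
        rcases hx with hx | hx
        · exact ⟨x, hx, hy⟩
        · exact absurd (desc_trans (traj_desc πs l s x hx) (desc_of_mem_stepf hy)) hd
      · rintro ⟨x, hx, hy⟩
        have hxmem : x ∈ traj πs r (t0 + s) := by rw [hsplit, Finset.mem_union]; exact Or.inl (by exact hx)
        exact ⟨⟨x, hxmem, hy⟩, fA x hx y hy⟩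
    refine ⟨by rw [show t0 + (s+1) = t0 + s + 1 by omega]; exact ha', ?_, ?_⟩
    -- (b)
    · rw [show t0 + (s+1) = t0 + s + 1 by omega, traj_succ, hb, haA]
      ext y
      simp only [Finset.mem_biUnion, Finset.mem_union, traj_succ]
      constructor
      · rintro ⟨x, hx | hx, hy⟩
        · exact Or.inl ⟨x, hx, by rw [← fA2 x hx]; exact hy⟩
        · exact Or.inr ⟨x, hx, hy⟩
      · rintro (⟨x, hx, hy⟩ | ⟨x, hx, hy⟩)
        · exact ⟨x, Or.inl hx, by rw [fA2 x hx]; exact hy⟩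
        · exact ⟨x, Or.inr hx, hy⟩
    -- (c)
    · rw [show t0 + (s+1) = t0 + s + 1 by omega, haA]
      rintro y hy ⟨pt, hp1, hp2⟩
      obtain ⟨x, hx, hy⟩ := Finset.mem_biUnion.mp hy
      exact hc x hx ⟨pt, inBranch_of_desc (desc_of_mem_stepf hy) hp1, hp2⟩

end Aux

lemma sum_range_add' (f : ℕ → ℝ) (a b : ℕ) :
    ∑ t ∈ Finset.range (a + b), f t
      = ∑ t ∈ Finset.range a, f t + ∑ s ∈ Finset.range b, f (a + s) := by
  induction b with
  | zero => simp
  | succ b ih =>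
    rw [show a + (b+1) = (a+b) + 1 by omega, Finset.sum_range_succ, ih,
      Finset.sum_range_succ, add_assoc]

/-- If `πs` is optimal and `l` is a non-terminal state appearing in
the trajectory of `πs` from the root (before time `τ_Ω^{πs}`), then for any policy
`π`, `V^π(l) ≤ V^{πs}(l)`. -/
theorem optimal_policy_dominates_on_relevant_states {q K : ℕ} (hq : 2 ≤ q) (hK : 2 ≤ K)
    {C : Fin q → ℕ} (hC : ∀ i, 2 ≤ C i)
    (D : Multiset ((∀ i : Fin q, Fin (C i)) × Fin K)) (hD : D ≠ 0)
    (lam : ℝ) (hlam0 : 0 < lam) (hlam1 : lam < 1)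
    (πs : Policy q C)
    (hopt : ∀ π : Policy q C, V D lam π (root q C) ≤ V D lam πs (root q C))
    (π : Policy q C) (l : Branch q C)
    (hl : ∃ t < tau πs (root q C), Sum.inl l ∈ traj πs (root q C) t) :
    V D lam π l ≤ V D lam πs l := by
  obtain ⟨t0, _, hmem⟩ := hl
  set π' := mix l π πs with hpi
  have hVl : V D lam π' l = V D lam π l :=
    V_locality D lam (fun b hb => mix_act_desc π πs hb)
  set N := q + 1 with hN
  have hroot' : V D lam π' (root q C)
      = ∑ t ∈ Finset.range (t0 + N), Sv D lam π' (root q C) t :=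
    V_eq_horizon D lam _ _ (le_trans (tau_le _ _) (by omega))
  have hroots : V D lam πs (root q C)
      = ∑ t ∈ Finset.range (t0 + N), Sv D lam πs (root q C) t :=
    V_eq_horizon D lam _ _ (le_trans (tau_le _ _) (by omega))
  have hVl' : V D lam π' l = ∑ s ∈ Finset.range N, Sv D lam π' l s :=
    V_eq_horizon D lam _ _ (tau_le _ _)
  have hVls : V D lam πs l = ∑ s ∈ Finset.range N, Sv D lam πs l s :=
    V_eq_horizon D lam _ _ (tau_le _ _)
  have hpre : ∀ t < t0, Sv D lam π' (root q C) t = Sv D lam πs (root q C) t := by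
    intro t ht
    unfold Sv
    rw [traj_mix_pre hC π πs hmem t (le_of_lt ht)]
    apply Finset.sum_congr rfl
    intro x hx
    refine rew_congr D lam x (fun b hb => ?_)
    subst hb
    exact mix_act_nondesc π πs (not_desc_of_lt hC hmem t ht b hx)
  have hmain : ∀ s, Sv D lam π' (root q C) (t0 + s) - Sv D lam πs (root q C) (t0 + s)
      = Sv D lam π' l s - Sv D lam πs l s := by
    intro s
    obtain ⟨ha, hb, hc⟩ := main_invariant hC π πs hmem s
    have hdisj : Disjoint ((traj πs (root q C) (t0 + s)).filter (fun x => ¬ desc l (br x)))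
        (traj π' l s) := by
      rw [Finset.disjoint_left]
      intro x hx hx'
      rw [Finset.mem_filter] at hx
      exact hx.2 (traj_desc π' l s x hx')
    have h1 : Sv D lam π' (root q C) (t0 + s)
        = (∑ x ∈ (traj πs (root q C) (t0+s)).filter (fun x => ¬ desc l (br x)), rew D lam πs x)
          + Sv D lam π' l s := by
      unfold Sv
      rw [hb, Finset.sum_union hdisj]
      congr 1
      apply Finset.sum_congr rfl
      intro x hx
      rw [Finset.mem_filter] at hx
      exact rew_congr D lam x (fun b hb' => by subst hb'; exact mix_act_nondesc π πs hx.2)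
    have h2 : Sv D lam πs (root q C) (t0 + s)
        = (∑ x ∈ (traj πs (root q C) (t0+s)).filter (fun x => ¬ desc l (br x)), rew D lam πs x)
          + Sv D lam πs l s := by
      unfold Sv
      rw [← Finset.sum_filter_add_sum_filter_not (traj πs (root q C) (t0+s))
        (fun x => desc l (br x)) (rew D lam πs), ha, add_comm]
    rw [h1, h2]
    ring
  have key : V D lam π' (root q C) - V D lam πs (root q C)
      = V D lam π' l - V D lam πs l := by
    rw [hroot', hroots, hVl', hVls, sum_range_add' _ t0 N, sum_range_add' _ t0 N]
    have e1 : ∑ t ∈ Finset.range t0, Sv D lam π' (root q C) t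
        = ∑ t ∈ Finset.range t0, Sv D lam πs (root q C) t :=
      Finset.sum_congr rfl (fun t ht => hpre t (Finset.mem_range.mp ht))
    have e2 : ∑ s ∈ Finset.range N, Sv D lam π' (root q C) (t0 + s)
        - ∑ s ∈ Finset.range N, Sv D lam πs (root q C) (t0 + s)
        = ∑ s ∈ Finset.range N, Sv D lam π' l s - ∑ s ∈ Finset.range N, Sv D lam πs l s := by
      rw [← Finset.sum_sub_distrib, ← Finset.sum_sub_distrib]
      exact Finset.sum_congr rfl (fun s _ => hmain s)
    linarith [e1, e2]
  have hop := hopt π'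
  linarith [hVl, key, hop]
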